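/- Let (G, v₀) be a turn-based game and ∼ a bisimulation equivalence on it that respects the partition and such that bisimilar plays have equal gain profiles. If σ is a uniform subgame perfect equilibrium in (G, v₀), then the strategy profile τ in the quotient game defined by τᵢ([h₀]…[hₙ]) = [σᵢ(h₀…hₙ)] (for any representative history h₀…hₙ, well-defined by uniformity) satisfies: the outcome of τ from [v₀] is the componentwise class of the outcome of σ from v₀, i.e., Out(τ)([v₀])ₙ = [Out(σ)(v₀)ₙ] for all n. -/

import Mathlib

/-- A history: a finite path starting at `v0`. -/
def IsHist {V : Type} (E : V → V → Prop) (v0 : V) (h : List V) : Prop :=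
  h.head? = some v0 ∧ h.Chain' E

/-- Last vertex of a history (with default `v0`). -/
def lastOf {V : Type} (v0 : V) (h : List V) : V := h.getLast?.getD v0

/-- A strategy profile `σ : P → List V → V` is valid if on every history it
proposes a successor of the last vertex. -/
def ValidProfile {V P : Type} (E : V → V → Prop) (owner : V → P) (v0 : V)
    (σ : P → List V → V) : Prop :=
  ∀ h, IsHist E v0 h → E (lastOf v0 h) (σ (owner (lastOf v0 h)) h)

/-- The successive histories produced by playing `σ` after the history `h0`. -/
def outHistFrom {V P : Type} (owner : V → P) (σ : P → List V → V) (v0 : V) (h0 : List V) :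
    ℕ → List V
  | 0 => h0
  | n + 1 =>
      outHistFrom owner σ v0 h0 n ++
        [σ (owner (lastOf v0 (outHistFrom owner σ v0 h0 n))) (outHistFrom owner σ v0 h0 n)]

/-- The infinite play obtained by the history `h0` followed by the outcome of `σ`. -/
def playFrom {V P : Type} (owner : V → P) (σ : P → List V → V) (v0 : V) (h0 : List V)
    (n : ℕ) : V :=
  (outHistFrom owner σ v0 h0 (n + 1)).getD n v0

/-- The outcome of the strategy profile `σ` from `v0`. -/
def outcomeSeq {V P : Type} (owner : V → P) (σ : P → List V → V) (v0 : V) : ℕ → V :=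
  playFrom owner σ v0 [v0]

/-- `σ` is a Nash equilibrium from `v0`: no player has a profitable deviation. -/
def IsNE {V P : Type} [DecidableEq P] (E : V → V → Prop) (owner : V → P) (v0 : V)
    (Gain : P → (ℕ → V) → Prop) (σ : P → List V → V) : Prop :=
  ∀ (i : P) (σ' : List V → V), (∀ h, IsHist E v0 h → E (lastOf v0 h) (σ' h)) →
    Gain i (outcomeSeq owner (Function.update σ i σ') v0) → Gain i (outcomeSeq owner σ v0)

/-- `σ` is a subgame perfect equilibrium from `v0`: after every history, no player has a
profitable deviation (gains being evaluated on the full play extending the history). -/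
def IsSPE {V P : Type} [DecidableEq P] (E : V → V → Prop) (owner : V → P) (v0 : V)
    (Gain : P → (ℕ → V) → Prop) (σ : P → List V → V) : Prop :=
  ∀ h0, IsHist E v0 h0 →
    ∀ (i : P) (σ' : List V → V), (∀ h, IsHist E v0 h → E (lastOf v0 h) (σ' h)) →
      Gain i (playFrom owner (Function.update σ i σ') v0 h0) →
      Gain i (playFrom owner σ v0 h0)

/-- `σ` is uniform w.r.t. the relation `r`: on componentwise `r`-related histories,
each player's choices are `r`-related. -/
def Uniform {V P : Type} (E : V → V → Prop) (v0 : V) (r : V → V → Prop)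
    (σ : P → List V → V) : Prop :=
  ∀ (i : P) (h h' : List V), IsHist E v0 h → IsHist E v0 h' → List.Forall₂ r h h' →
    r (σ i h) (σ i h')

/-- Edges of the quotient game. -/
def QEdge {V : Type} (s : Setoid V) (E : V → V → Prop) :
    Quotient s → Quotient s → Prop :=
  fun c c' => ∃ v v', Quotient.mk s v = c ∧ Quotient.mk s v' = c' ∧ E v v'

/-- If `σ` is a uniform SPE of `(G, v₀)` and `τ` is the quotient-game strategy profile
defined by `τᵢ([h₀]…[hₙ]) = [σᵢ(h₀…hₙ)]` (well-defined by uniformity), then the outcome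
of `τ` from `[v₀]` is componentwise the class of the outcome of `σ` from `v₀`. -/
theorem stmt9 {V P : Type} [DecidableEq P] (E : V → V → Prop) (owner : V → P) (v0 : V)
    (Gain : P → (ℕ → V) → Prop) (s : Setoid V)
    (hbisim : ∀ v v' w, s.r v v' → E v w → ∃ w', E v' w' ∧ s.r w w')
    (hpart : ∀ v v', s.r v v' → owner v = owner v')
    (hgain : ∀ (i : P) (ρ ρ' : ℕ → V), (∀ n, s.r (ρ n) (ρ' n)) → (Gain i ρ ↔ Gain i ρ'))
    (σ : P → List V → V)
    (hvalid : ValidProfile E owner v0 σ)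
    (hunif : Uniform E v0 s.r σ)
    (hSPE : IsSPE E owner v0 Gain σ)
    (qowner : Quotient s → P) (hqowner : ∀ v, qowner (Quotient.mk s v) = owner v)
    (τ : P → List (Quotient s) → Quotient s)
    (hτ : ∀ (i : P) (h : List V), IsHist E v0 h →
      τ i (h.map (Quotient.mk s)) = Quotient.mk s (σ i h)) :
    ∀ n, outcomeSeq qowner τ (Quotient.mk s v0) n =
      Quotient.mk s (outcomeSeq owner σ v0 n) := by

  have hist : ∀ n, IsHist E v0 (outHistFrom owner σ v0 [v0] n) := by
    intro n
    induction n with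
    | zero => exact ⟨rfl, List.isChain_singleton v0⟩
    | succ n ih =>
      obtain ⟨hh, hc⟩ := ih
      refine ⟨?_, ?_⟩
      · rw [outHistFrom]
        cases h : outHistFrom owner σ v0 [v0] n with
        | nil => rw [h] at hh; simp at hh
        | cons a l => rw [h] at hh; simpa using hh
      · rw [outHistFrom, List.Chain', List.isChain_append]
        refine ⟨hc, List.isChain_singleton _, ?_⟩
        intro x hx y hy
        simp only [List.head?_cons, Option.mem_def, Option.some.injEq] at hy
        subst hy
        have hx' : lastOf v0 (outHistFrom owner σ v0 [v0] n) = x := by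
          unfold lastOf; rw [hx]; rfl
        rw [← hx']
        exact hvalid _ ⟨hh, hc⟩
  have key : ∀ n, outHistFrom qowner τ (Quotient.mk s v0) [Quotient.mk s v0] n
      = (outHistFrom owner σ v0 [v0] n).map (Quotient.mk s) := by
    intro n
    induction n with
    | zero => rfl
    | succ n ih =>
      have hne : outHistFrom owner σ v0 [v0] n ≠ [] := by
        intro h; have := (hist n).1; rw [h] at this; simp at this
      have hlast : lastOf (Quotient.mk s v0)
          ((outHistFrom owner σ v0 [v0] n).map (Quotient.mk s))
          = Quotient.mk s (lastOf v0 (outHistFrom owner σ v0 [v0] n)) := by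
        unfold lastOf
        rw [List.getLast?_map]
        cases h : (outHistFrom owner σ v0 [v0] n).getLast? with
        | none => exact absurd (List.getLast?_eq_none_iff.mp h) hne
        | some a => rfl
      rw [outHistFrom, outHistFrom, ih, hlast, hqowner, hτ _ _ (hist n)]
      simp
  intro n
  show (outHistFrom qowner τ (Quotient.mk s v0) [Quotient.mk s v0] (n+1)).getD n
      (Quotient.mk s v0) = Quotient.mk s ((outHistFrom owner σ v0 [v0] (n+1)).getD n v0)
  rw [key (n+1)]
  rw [List.getD_eq_getElem?_getD, List.getD_eq_getElem?_getD, List.getElem?_map]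
  cases h : (outHistFrom owner σ v0 [v0] (n+1))[n]? <;> simp [h]
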